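/- For every integer n ≥ 4 and every field F of characteristic zero, the upper central series z_1 ⊆ z_2 ⊆ … of the Lie algebra n_{n,1} satisfies: z_k equals the span of e_1, …, e_k for every 1 ≤ k ≤ n−2 (in particular the center of n_{n,1} is the one-dimensional span of e_1), and z_{n−1} is all of n_{n,1}; hence the dimensions in the upper central series are [1, 2, …, n−2, n]. -/

import Mathlib

/-- The family `e 1, …, e n` is a basis of `L` realizing the Lie brackets of the
nilpotent Lie algebra `n_{n,1}`. -/
def IsNn1Basis (F : Type*) [Field F] (n : ℕ) {L : Type*} [LieRing L] [LieAlgebra F L]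
    (e : ℕ → L) : Prop :=
  LinearIndependent F (fun i : Fin n => e (i.val + 1)) ∧
  Submodule.span F (Set.range (fun i : Fin n => e (i.val + 1))) = ⊤ ∧
  (∀ j k : ℕ, 1 ≤ j → j ≤ n - 1 → 1 ≤ k → k ≤ n - 1 → ⁅e j, e k⁆ = 0) ∧
  ⁅e 1, e n⁆ = 0 ∧
  (∀ k : ℕ, 2 ≤ k → k ≤ n - 1 → ⁅e k, e n⁆ = e (k - 1))

/-- The upper central series `z_k = ucs k ⊥` of `n_{n,1}` satisfies
`z_k = span (e 1, …, e k)` for `1 ≤ k ≤ n-2` (in particular the center is the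
one-dimensional span of `e 1`) and `z_{n-1} = L`; hence the dimensions in the upper
central series are `[1, 2, …, n-2, n]`. -/
theorem nn1_upper_central_series
    (F : Type*) [Field F] [CharZero F] (n : ℕ) (hn : 4 ≤ n)
    (L : Type*) [LieRing L] [LieAlgebra F L] (e : ℕ → L)
    (he : IsNn1Basis F n e) :
    (∀ k : ℕ, 1 ≤ k → k ≤ n - 2 →
      (((⊥ : LieSubmodule F L L).ucs k : Submodule F L)
        = Submodule.span F (e '' Set.Icc 1 k) ∧
       Module.finrank F ((⊥ : LieSubmodule F L L).ucs k) = k)) ∧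
    ((LieAlgebra.center F L : Submodule F L) = Submodule.span F {e 1} ∧
      Module.finrank F (LieAlgebra.center F L) = 1) ∧
    ((⊥ : LieSubmodule F L L).ucs (n - 1) = ⊤ ∧
      Module.finrank F ((⊥ : LieSubmodule F L L).ucs (n - 1)) = n) := by
  obtain ⟨hli, hsp, hcomm, h1n, hkn⟩ := he
  let b : Module.Basis (Fin n) F L := Module.Basis.mk hli (by rw [hsp])
  have hb : ∀ i : Fin n, b i = e (i.val + 1) := fun i => Module.Basis.mk_apply hli _ i
  have hcoeEq : ∀ N : LieSubmodule F L L,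
      (N : Submodule F L) = LieSubmodule.toSubmodule N := fun _ => rfl
  have hmemcoe : ∀ (N : LieSubmodule F L L) (x : L), x ∈ (N : Submodule F L) ↔ x ∈ N :=
    fun _ _ => Iff.rfl
  -- the span of `e 1, …, e k` as a basis image
  have hset : ∀ k : ℕ, k ≤ n → e '' Set.Icc 1 k = b '' {i : Fin n | i.val < k} := by
    intro k hk
    ext x
    constructor
    · rintro ⟨j, hj, rfl⟩
      obtain ⟨hj1, hjk⟩ := hj
      refine ⟨⟨j - 1, by omega⟩, by simpa using by omega, ?_⟩
      rw [hb]; congr 1; simp; omega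
    · rintro ⟨i, hi, rfl⟩
      have hi' : i.val < k := hi
      exact ⟨i.val + 1, ⟨by omega, by omega⟩, (hb i).symm⟩
  have memS : ∀ k : ℕ, k ≤ n → ∀ x : L,
      x ∈ Submodule.span F (e '' Set.Icc 1 k) ↔ ∀ i : Fin n, k ≤ i.val → b.repr x i = 0 := by
    intro k hk x
    rw [hset k hk, b.mem_span_image]
    constructor
    · intro h i hi
      by_contra hne
      have := h (by simpa using Finsupp.mem_support_iff.2 hne)
      simp only [Set.mem_setOf_eq] at this
      omega
    · intro h i hi
      simp only [Finset.mem_coe, Finsupp.mem_support_iff] at hi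
      simp only [Set.mem_setOf_eq]
      by_contra hlt
      exact hi (h i (by omega))
  -- the right-bracket-with-`e n` linear map
  let T : L →ₗ[F] L :=
    { toFun := fun m => ⁅m, e n⁆
      map_add' := fun x y => add_lie x y (e n)
      map_smul' := fun c x => smul_lie c x (e n) }
  have hshift : ∀ (j : Fin n) (hj : j.val + 1 ≤ n - 2) (m : L),
      b.repr ⁅m, e n⁆ j = b.repr m ⟨j.val + 1, by omega⟩ := by
    intro j hj
    have key : (b.coord j).comp T = b.coord ⟨j.val + 1, by omega⟩ := by
      apply b.ext
      intro i
      simp only [LinearMap.comp_apply, Module.Basis.coord_apply]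
      have hTbi : T (b i) = ⁅e (i.val + 1), e n⁆ := by rw [hb]; rfl
      rw [hTbi]
      rcases Nat.lt_or_ge i.val 1 with h0 | h1
      · have : i.val = 0 := by omega
        rw [show e (i.val + 1) = e 1 by rw [this]]
        rw [h1n]
        simp only [map_zero, Finsupp.coe_zero, Pi.zero_apply]
        rw [Module.Basis.repr_self_apply]
        have : ¬ (i = ⟨j.val + 1, by omega⟩) := by
          simp only [Fin.ext_iff]; omega
        simp [this]
      · rcases Nat.lt_or_ge i.val (n - 1) with h2 | h3
        · -- 1 ≤ i.val ≤ n - 2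
          have hbr : ⁅e (i.val + 1), e n⁆ = e i.val := by
            have := hkn (i.val + 1) (by omega) (by omega)
            simpa using this
          rw [hbr, show e i.val = b ⟨i.val - 1, by omega⟩ by rw [hb]; congr 1; simp; omega]
          rw [Module.Basis.repr_self_apply, Module.Basis.repr_self_apply]
          have hiff : ((⟨i.val - 1, by omega⟩ : Fin n) = j) ↔ (i = ⟨j.val + 1, by omega⟩) := by
            simp only [Fin.ext_iff]; omega
          simp only [hiff]
        · -- i.val = n - 1
          have : i.val + 1 = n := by omega
          rw [show e (i.val + 1) = e n by rw [this], lie_self]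
          simp only [map_zero, Finsupp.coe_zero, Pi.zero_apply]
          rw [Module.Basis.repr_self_apply]
          have : ¬ (i = ⟨j.val + 1, by omega⟩) := by
            simp only [Fin.ext_iff]; omega
          simp [this]
    intro m
    have := LinearMap.congr_fun key m
    exact (by simpa using this : (b.repr (T m)) j = _)
  -- bracket with `e (n-1)`
  have hlast : ∀ m : L, ⁅e (n - 1), m⁆ = b.repr m ⟨n - 1, by omega⟩ • e (n - 2) := by
    have key : (LieModule.toEnd F L L (e (n - 1)) : L →ₗ[F] L)
        = (b.coord ⟨n - 1, by omega⟩).smulRight (e (n - 2)) := by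
      apply b.ext
      intro i
      simp only [LieModule.toEnd_apply_apply, LinearMap.smulRight_apply, Module.Basis.coord_apply,
        Module.Basis.repr_self_apply]
      rcases Nat.lt_or_ge i.val (n - 1) with h2 | h3
      · rw [if_neg (by simp only [Fin.ext_iff]; omega), zero_smul, hb,
          hcomm (n - 1) (i.val + 1) (by omega) (by omega) (by omega) (by omega)]
      · rw [if_pos (by simp only [Fin.ext_iff]; omega : i = ⟨n - 1, by omega⟩), one_smul, hb,
          show e (i.val + 1) = e n by congr 1; omega]
        have := hkn (n - 1) (by omega) (by omega)
        rw [this]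
        exact congrArg e (by omega)
    intro m
    have := LinearMap.congr_fun key m
    simpa using this
  -- main induction
  have main : ∀ k : ℕ, k ≤ n - 2 →
      ((⊥ : LieSubmodule F L L).ucs k : Submodule F L)
        = Submodule.span F (e '' Set.Icc 1 k) := by
    intro k
    induction k with
    | zero =>
      intro _
      rw [LieSubmodule.ucs_zero, show Set.Icc 1 0 = (∅ : Set ℕ) from Set.Icc_eq_empty (by omega),
        Set.image_empty, Submodule.span_empty]
      exact (hcoeEq ⊥).trans LieSubmodule.bot_toSubmodule
    | succ k ih =>
      intro hk1
      have hk : k ≤ n - 2 := by omega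
      have ihk := ih hk
      rw [LieSubmodule.ucs_succ]
      apply le_antisymm
      · intro m hm
        rw [hmemcoe, LieSubmodule.mem_normalizer] at hm
        have hm' : ∀ x : L, ⁅x, m⁆ ∈ Submodule.span F (e '' Set.Icc 1 k) := by
          intro x
          rw [← ihk]
          exact (hmemcoe _ _).2 (hm x)
        refine (memS (k + 1) (by omega) m).2 ?_
        intro i hi
        rcases Nat.lt_or_ge i.val (n - 1) with h2 | h3
        · -- k + 1 ≤ i.val ≤ n - 2
          have hj : i.val - 1 + 1 ≤ n - 2 := by omega
          have hs := hshift ⟨i.val - 1, by omega⟩ hj m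
          have hmem : ⁅m, e n⁆ ∈ Submodule.span F (e '' Set.Icc 1 k) := by
            rw [← lie_skew]
            exact neg_mem (hm' (e n))
          have h0 := (memS k (by omega) _).1 hmem ⟨i.val - 1, by omega⟩ (by simpa using by omega)
          rw [h0] at hs
          have : (⟨(i.val - 1) + 1, by omega⟩ : Fin n) = i := by simp only [Fin.ext_iff]; omega
          rw [this] at hs
          exact hs.symm
        · -- i.val = n - 1
          have hieq : i = ⟨n - 1, by omega⟩ := by simp only [Fin.ext_iff]; omega
          have hmem := hm' (e (n - 1))
          rw [hlast m] at hmem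
          have h0 := (memS k (by omega) _).1 hmem ⟨n - 3, by omega⟩ (by simpa using by omega)
          rw [show e (n - 2) = b ⟨n - 3, by omega⟩ by rw [hb]; congr 1; simp; omega] at h0
          simp only [map_smul, Finsupp.coe_smul, Pi.smul_apply, Module.Basis.repr_self_apply,
            smul_eq_mul, if_pos, mul_one, smul_eq_zero] at h0
          rw [hieq]
          simpa using h0
      · apply Submodule.span_le.2
        rintro x ⟨j, hj, rfl⟩
        obtain ⟨hj1, hjk⟩ := hj
        simp only [SetLike.mem_coe]
        rw [hmemcoe, LieSubmodule.mem_normalizer]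
        intro x
        -- reduce to generators
        let Tj : L →ₗ[F] L :=
          { toFun := fun y => ⁅y, e j⁆
            map_add' := fun a c => add_lie a c (e j)
            map_smul' := fun c a => smul_lie c a (e j) }
        have hgen : (⊤ : Submodule F L) ≤
            Submodule.comap Tj ((⊥ : LieSubmodule F L L).ucs k : Submodule F L) := by
          rw [← hsp]
          apply Submodule.span_le.2
          rintro _ ⟨i, rfl⟩
          simp only [SetLike.mem_coe, Submodule.mem_comap]
          have hTj : Tj (e (i.val + 1)) = ⁅e (i.val + 1), e j⁆ := rfl
          rw [hTj, ihk]
          rcases Nat.lt_or_ge i.val (n - 1) with h2 | h3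
          · rw [hcomm (i.val + 1) j (by omega) (by omega) (by omega) (by omega)]
            exact zero_mem _
          · rw [show e (i.val + 1) = e n by congr 1; omega]
            rw [← lie_skew]
            rcases Nat.lt_or_ge j 2 with hj2 | hj2
            · rw [show j = 1 by omega, h1n, neg_zero]
              exact zero_mem _
            · rw [hkn j hj2 (by omega)]
              exact neg_mem (Submodule.subset_span ⟨j - 1, ⟨by omega, by omega⟩, rfl⟩)
        have := hgen (Submodule.mem_top : x ∈ ⊤)
        rw [Submodule.mem_comap] at this
        exact (hmemcoe _ _).1 this
  -- bracket of any two elements lies in span (e 1 … e (n-2))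
  have hall : ∀ x m : L, ⁅x, m⁆ ∈ Submodule.span F (e '' Set.Icc 1 (n - 2)) := by
    have hgen : ∀ p q : ℕ, 1 ≤ p → p ≤ n → 1 ≤ q → q ≤ n →
        ⁅e p, e q⁆ ∈ Submodule.span F (e '' Set.Icc 1 (n - 2)) := by
      intro p q hp1 hpn hq1 hqn
      rcases Nat.lt_or_ge p n with hp | hp
      · rcases Nat.lt_or_ge q n with hq | hq
        · rw [hcomm p q (by omega) (by omega) (by omega) (by omega)]
          exact zero_mem _
        · have : q = n := by omega
          rw [this]
          rcases Nat.lt_or_ge p 2 with hp2 | hp2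
          · rw [show p = 1 by omega, h1n]; exact zero_mem _
          · rw [hkn p hp2 (by omega)]
            exact Submodule.subset_span ⟨p - 1, ⟨by omega, by omega⟩, rfl⟩
      · have hpe : p = n := by omega
        rcases Nat.lt_or_ge q n with hq | hq
        · rw [hpe, ← lie_skew]
          rcases Nat.lt_or_ge q 2 with hq2 | hq2
          · rw [show q = 1 by omega, h1n, neg_zero]; exact zero_mem _
          · rw [hkn q hq2 (by omega)]
            exact neg_mem (Submodule.subset_span ⟨q - 1, ⟨by omega, by omega⟩, rfl⟩)
        · rw [hpe, show q = n by omega, lie_self]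
          exact zero_mem _
    -- first reduce the left argument
    have step1 : ∀ q : ℕ, 1 ≤ q → q ≤ n → ∀ x : L,
        ⁅x, e q⁆ ∈ Submodule.span F (e '' Set.Icc 1 (n - 2)) := by
      intro q hq1 hqn x
      let Tq : L →ₗ[F] L :=
        { toFun := fun y => ⁅y, e q⁆
          map_add' := fun a c => add_lie a c (e q)
          map_smul' := fun c a => smul_lie c a (e q) }
      have hred : (⊤ : Submodule F L) ≤
          Submodule.comap Tq (Submodule.span F (e '' Set.Icc 1 (n - 2))) := by
        rw [← hsp]
        apply Submodule.span_le.2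
        rintro _ ⟨i, rfl⟩
        simp only [SetLike.mem_coe, Submodule.mem_comap]
        exact hgen (i.val + 1) q (by omega) (by omega) hq1 hqn
      have := hred (Submodule.mem_top : x ∈ ⊤)
      rwa [Submodule.mem_comap] at this
    intro x m
    have hred : (⊤ : Submodule F L) ≤
        Submodule.comap (LieModule.toEnd F L L x : L →ₗ[F] L)
          (Submodule.span F (e '' Set.Icc 1 (n - 2))) := by
      rw [← hsp]
      apply Submodule.span_le.2
      rintro _ ⟨i, rfl⟩
      simp only [SetLike.mem_coe, Submodule.mem_comap, LieModule.toEnd_apply_apply]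
      exact step1 (i.val + 1) (by omega) (by omega) x
    have := hred (Submodule.mem_top : m ∈ ⊤)
    rw [Submodule.mem_comap] at this
    simpa using this
  -- z_{n-1} = ⊤
  have htop : (⊥ : LieSubmodule F L L).ucs (n - 1) = ⊤ := by
    rw [show n - 1 = (n - 2) + 1 by omega, LieSubmodule.ucs_succ, eq_top_iff]
    intro m _
    rw [LieSubmodule.mem_normalizer]
    intro x
    rw [← hmemcoe _ _, main (n - 2) le_rfl]
    exact hall x m
  -- finrank of spans
  have hrank : ∀ k : ℕ, k ≤ n →
      Module.finrank F (Submodule.span F (e '' Set.Icc 1 k)) = k := by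
    intro k hk
    have hrange : e '' Set.Icc 1 k = Set.range (fun i : Fin k => e (i.val + 1)) := by
      ext x
      constructor
      · rintro ⟨j, hj, rfl⟩
        obtain ⟨h1, h2⟩ := hj
        exact ⟨⟨j - 1, by omega⟩, by simp; congr 1; omega⟩
      · rintro ⟨i, rfl⟩
        exact ⟨i.val + 1, ⟨by omega, by omega⟩, rfl⟩
    rw [hrange]
    have hli' : LinearIndependent F (fun i : Fin k => e (i.val + 1)) :=
      hli.comp (Fin.castLE hk) (Fin.castLE_injective hk)
    simpa using finrank_span_eq_card hli'
  -- transferring finrank along coe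
  have frk : ∀ (N : LieSubmodule F L L) (S : Submodule F L),
      (N : Submodule F L) = S → Module.finrank F N = Module.finrank F S := by
    rintro N S rfl
    rfl
  have he1 : e 1 ≠ 0 := by
    have := b.ne_zero ⟨0, by omega⟩
    rwa [hb] at this
  have hc1 : (LieAlgebra.center F L : Submodule F L)
      = ((⊥ : LieSubmodule F L L).ucs 1 : Submodule F L) := by
    have : LieAlgebra.center F L = (⊥ : LieSubmodule F L L).ucs 1 := by
      ext m
      rw [LieSubmodule.ucs_succ, LieSubmodule.ucs_zero, LieSubmodule.mem_normalizer]
      simp [LieModule.mem_maxTrivSubmodule, LieSubmodule.mem_bot]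
    rw [this]
  have hIcc1 : e '' Set.Icc 1 1 = {e 1} := by
    rw [Set.Icc_self, Set.image_singleton]
  have hcenter : (LieAlgebra.center F L : Submodule F L) = Submodule.span F {e 1} := by
    rw [hc1, main 1 (by omega), hIcc1]
  refine ⟨?_, ⟨hcenter, ?_⟩, htop, ?_⟩
  · intro k hk1 hk2
    exact ⟨main k hk2, (frk _ _ (main k hk2)).trans (hrank k (by omega))⟩
  · rw [frk _ _ hcenter]
    exact finrank_span_singleton he1
  · have h1 : ((⊥ : LieSubmodule F L L).ucs (n - 1) : Submodule F L) = ⊤ := by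
      rw [htop]
      exact (hcoeEq ⊤).trans LieSubmodule.top_toSubmodule
    rw [frk _ _ h1, finrank_top]
    rw [Module.finrank_eq_card_basis b, Fintype.card_fin]
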